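/- Let $\mathcal{K}_*$ be a nonempty Borel subset of the space $\mathcal{K}^n$ of convex bodies, let $\mu$ be a Borel probability measure on $\mathcal{K}_*$ with bounded support, and let $K \in \mathcal{K}^n$ be the convex body with $h_K = \int h_P \, \mu(dP)$. Then $K$ is the limit, in the Hausdorff metric, of a sequence of finite nonnegative Minkowski combinations of bodies from the support of $\mu$. -/

import Mathlib

open scoped Pointwise RealInnerProductSpace NNReal
open MeasureTheory Filter Topology

noncomputable section

/-- Support function of a convex body. -/
def sfn {n : ℕ} (K : ConvexBody (EuclideanSpace ℝ (Fin n))) (u : EuclideanSpace ℝ (Fin n)) : ℝ :=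
  sSup ((fun x => ⟪x, u⟫) '' (K : Set (EuclideanSpace ℝ (Fin n))))

/-- The support of a measure on a topological space: points all of whose open
neighbourhoods have positive measure. -/
def msupport {X : Type*} [TopologicalSpace X] [MeasurableSpace X] (μ : Measure X) : Set X :=
  {x | ∀ U : Set X, IsOpen U → x ∈ U → μ U ≠ 0}

namespace MacroidAux

variable {n : ℕ}

local notation "E" => EuclideanSpace ℝ (Fin n)

lemma inner_cont (u : E) : Continuous fun x : E => ⟪x, u⟫ :=
  continuous_id.inner continuous_const

lemma bddAbove_sfn (K : ConvexBody E) (u : E) :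
    BddAbove ((fun x => ⟪x, u⟫) '' (K : Set E)) :=
  (K.isCompact.image (inner_cont u)).bddAbove

lemma le_sfn {K : ConvexBody E} {x : E} (hx : x ∈ (K : Set E)) (u : E) : ⟪x, u⟫ ≤ sfn K u :=
  le_csSup (bddAbove_sfn K u) ⟨x, hx, rfl⟩

lemma sfn_le {K : ConvexBody E} {u : E} {c : ℝ} (h : ∀ x ∈ (K : Set E), ⟪x, u⟫ ≤ c) :
    sfn K u ≤ c :=
  csSup_le (K.nonempty.image _) (by rintro r ⟨x, hx, rfl⟩; exact h x hx)

lemma exists_sfn_eq (K : ConvexBody E) (u : E) : ∃ x ∈ (K : Set E), sfn K u = ⟪x, u⟫ := by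
  obtain ⟨x, hx, hx'⟩ := (K.isCompact.image (inner_cont u)).sSup_mem (K.nonempty.image _)
  exact ⟨x, hx, hx'.symm⟩

lemma sfn_zero (u : E) : sfn (0 : ConvexBody E) u = 0 := by
  have h : ((0 : ConvexBody E) : Set E) = {0} := rfl
  simp [sfn, h]

lemma sfn_add (K L : ConvexBody E) (u : E) : sfn (K + L) u = sfn K u + sfn L u := by
  apply le_antisymm
  · apply sfn_le
    intro x hx
    rw [ConvexBody.coe_add] at hx
    obtain ⟨y, hy, z, hz, rfl⟩ := Set.mem_add.mp hx
    rw [inner_add_left]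
    exact add_le_add (le_sfn hy u) (le_sfn hz u)
  · obtain ⟨y, hy, hyv⟩ := exists_sfn_eq K u
    obtain ⟨z, hz, hzv⟩ := exists_sfn_eq L u
    rw [hyv, hzv, ← inner_add_left]
    refine le_sfn ?_ u
    rw [ConvexBody.coe_add]
    exact Set.add_mem_add hy hz

lemma sfn_smul (c : ℝ≥0) (K : ConvexBody E) (u : E) : sfn (c • K) u = (c : ℝ) * sfn K u := by
  apply le_antisymm
  · apply sfn_le
    intro x hx
    rw [ConvexBody.coe_smul'] at hx
    obtain ⟨y, hy, rfl⟩ := Set.mem_smul_set.mp hx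
    rw [NNReal.smul_def, real_inner_smul_left]
    exact mul_le_mul_of_nonneg_left (le_sfn hy u) c.coe_nonneg
  · obtain ⟨y, hy, hyv⟩ := exists_sfn_eq K u
    rw [hyv, ← real_inner_smul_left, ← NNReal.smul_def]
    refine le_sfn ?_ u
    rw [ConvexBody.coe_smul']
    exact Set.smul_mem_smul_set hy

lemma sfn_sum {N : ℕ} (c : Fin N → ℝ≥0) (L : Fin N → ConvexBody E) (u : E) :
    sfn (∑ i, c i • L i) u = ∑ i, (c i : ℝ) * sfn (L i) u := by
  classical
  have h : ∀ s : Finset (Fin N),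
      sfn (∑ i ∈ s, c i • L i) u = ∑ i ∈ s, (c i : ℝ) * sfn (L i) u := by
    intro s
    induction s using Finset.induction_on with
    | empty => simp [sfn_zero]
    | @insert a s h ih =>
      rw [Finset.sum_insert h, Finset.sum_insert h, sfn_add, sfn_smul, ih]
  exact h Finset.univ

lemma sfn_le_dist (P Q : ConvexBody E) (u : E) :
    sfn P u ≤ sfn Q u + dist P Q * ‖u‖ := by
  obtain ⟨x, hx, hxv⟩ := exists_sfn_eq P u
  have h1 : Metric.infDist x (Q : Set E) ≤ dist P Q := by
    rw [← ConvexBody.hausdorffDist_coe]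
    exact Metric.infDist_le_hausdorffDist_of_mem hx ConvexBody.hausdorffEdist_ne_top
  obtain ⟨y, hy, hdy⟩ := Q.isCompact.exists_infDist_eq_dist Q.nonempty x
  have h2 : ⟪x - y, u⟫ ≤ dist P Q * ‖u‖ := by
    calc ⟪x - y, u⟫ ≤ ‖x - y‖ * ‖u‖ := real_inner_le_norm _ _
      _ ≤ dist P Q * ‖u‖ := by
          apply mul_le_mul_of_nonneg_right _ (norm_nonneg u)
          rw [← dist_eq_norm, ← hdy]; exact h1
  have h3 : ⟪x, u⟫ = ⟪y, u⟫ + ⟪x - y, u⟫ := by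
    rw [inner_sub_left]; ring
  have h4 : ⟪y, u⟫ ≤ sfn Q u := le_sfn hy u
  rw [hxv, h3]
  linarith

lemma abs_sfn_sub (P Q : ConvexBody E) (u : E) :
    |sfn P u - sfn Q u| ≤ dist P Q * ‖u‖ := by
  rw [abs_sub_le_iff]
  constructor
  · have := sfn_le_dist P Q u; linarith
  · have := sfn_le_dist Q P u; rw [dist_comm] at this; linarith

lemma subset_of_sfn_le {P Q : ConvexBody E} {ε : ℝ} (hε : 0 ≤ ε)
    (h : ∀ u, sfn P u ≤ sfn Q u + ε * ‖u‖) :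
    ∀ x ∈ (P : Set E), ∃ y ∈ (Q : Set E), dist x y ≤ ε := by
  intro x hx
  by_contra hcon
  push_neg at hcon
  set S : Set E := (Q : Set E) + Metric.closedBall 0 ε with hS
  have hSconv : Convex ℝ S := Q.convex.add (convex_closedBall 0 ε)
  have hScl : IsClosed S := (Q.isCompact.add (isCompact_closedBall 0 ε)).isClosed
  have hxS : x ∉ S := by
    intro hmem
    obtain ⟨y, hy, z, hz, hyz⟩ := Set.mem_add.mp hmem
    have h1 : dist x y = ‖z‖ := by rw [← hyz, dist_eq_norm]; simp
    have h2 := hcon y hy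
    have h3 := mem_closedBall_zero_iff.mp hz
    rw [h1] at h2; exact absurd h3 (not_le.mpr h2)
  obtain ⟨f, s, hfS, hfx⟩ := geometric_hahn_banach_closed_point hSconv hScl hxS
  set v : E := (InnerProductSpace.toDual ℝ E).symm f with hv
  have hfv : ∀ z : E, ⟪z, v⟫ = f z := fun z => by
    rw [real_inner_comm]; exact InnerProductSpace.toDual_symm_apply
  obtain ⟨q, hq, hqv⟩ := exists_sfn_eq Q v
  have key : sfn Q v + ε * ‖v‖ < s := by
    rcases eq_or_ne v 0 with h0 | h0
    · have hq0 : sfn Q v = 0 := by rw [hqv, h0, inner_zero_right]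
      have hqS : q ∈ S := ⟨q, hq, 0, by simpa using hε, by simp⟩
      have hlt := hfS q hqS
      rw [← hfv q, ← hqv, hq0] at hlt
      rw [hq0, h0]
      simpa using hlt
    · set w : E := (ε / ‖v‖) • v with hw
      have hvn : (0:ℝ) < ‖v‖ := norm_pos_iff.mpr h0
      have hwnorm : ‖w‖ ≤ ε := by
        rw [hw, norm_smul, Real.norm_eq_abs, abs_of_nonneg (by positivity),
          div_mul_cancel₀ _ hvn.ne']
      have hwv : ⟪w, v⟫ = ε * ‖v‖ := by
        rw [hw, real_inner_smul_left, real_inner_self_eq_norm_mul_norm]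
        field_simp
      have hqwS : q + w ∈ S := ⟨q, hq, w, mem_closedBall_zero_iff.mpr hwnorm, rfl⟩
      have := hfS _ hqwS
      rw [← hfv (q + w), inner_add_left, hwv, ← hqv] at this
      exact this
  have h2 : s < sfn P v := by
    rw [← hfv x] at hfx
    exact lt_of_lt_of_le hfx (le_sfn hx v)
  have h3 := h v
  linarith

lemma dist_le_of_sfn {P Q : ConvexBody E} {ε : ℝ} (hε : 0 ≤ ε)
    (h1 : ∀ u, sfn P u ≤ sfn Q u + ε * ‖u‖) (h2 : ∀ u, sfn Q u ≤ sfn P u + ε * ‖u‖) :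
    dist P Q ≤ ε := by
  rw [← ConvexBody.hausdorffDist_coe]
  exact Metric.hausdorffDist_le_of_mem_dist hε (subset_of_sfn_le hε h1) (subset_of_sfn_le hε h2)

/-- Convex hull of a finite set as a convex body (zero body if the set is empty). -/
def hullBody (S : Finset E) : ConvexBody E :=
  if h : S.Nonempty then
    ⟨convexHull ℝ (S : Set E), convex_convexHull ℝ _, S.finite_toSet.isCompact_convexHull (𝕜 := ℝ),
      (Finset.coe_nonempty.mpr h).mono (subset_convexHull ℝ _)⟩
  else 0

lemma coe_hullBody {S : Finset E} (h : S.Nonempty) :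
    (hullBody S : Set E) = convexHull ℝ (S : Set E) := by
  rw [hullBody, dif_pos h]
  rfl

lemma totallyBounded_of_forall_subset {C : Set (ConvexBody E)} {R : ℝ}
    (h : ∀ P ∈ C, (P : Set E) ⊆ Metric.closedBall 0 R) : TotallyBounded C := by
  classical
  rw [Metric.totallyBounded_iff]
  intro ε hε
  have hε' : 0 < ε / 2 := half_pos hε
  obtain ⟨s, hsfin, hscov⟩ :=
    Metric.totallyBounded_iff.mp ((isCompact_closedBall (0:E) R).totallyBounded) (ε/2) hε'
  refine ⟨↑(hsfin.toFinset.powerset.image hullBody), Finset.finite_toSet _, ?_⟩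
  intro P hP
  set T : Finset E := hsfin.toFinset.filter (fun y => ∃ x ∈ (P : Set E), dist x y < ε/2) with hT
  have hTsub : T ⊆ hsfin.toFinset := Finset.filter_subset _ _
  have hx_close : ∀ x ∈ (P : Set E), ∃ y ∈ T, dist x y < ε/2 := by
    intro x hx
    obtain ⟨y, hy, hxy⟩ := Set.mem_iUnion₂.mp (hscov (h P hP hx))
    rw [Metric.mem_ball] at hxy
    exact ⟨y, Finset.mem_filter.mpr ⟨hsfin.mem_toFinset.mpr hy, ⟨x, hx, hxy⟩⟩, hxy⟩
  have hTne : T.Nonempty := by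
    obtain ⟨x, hx⟩ := P.nonempty
    obtain ⟨y, hyT, -⟩ := hx_close x hx
    exact ⟨y, hyT⟩
  refine Set.mem_biUnion (Finset.mem_coe.mpr
    (Finset.mem_image.mpr ⟨T, Finset.mem_powerset.mpr hTsub, rfl⟩)) ?_
  rw [Metric.mem_ball, ← ConvexBody.hausdorffDist_coe]
  refine lt_of_le_of_lt (Metric.hausdorffDist_le_of_mem_dist hε'.le ?_ ?_) (half_lt_self hε)
  · intro x hx
    obtain ⟨y, hyT, hxy⟩ := hx_close x hx
    exact ⟨y, by rw [coe_hullBody hTne]; exact subset_convexHull ℝ _ (Finset.mem_coe.mpr hyT),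
      hxy.le⟩
  · intro z hz
    have hsub : (T : Set E) ⊆ (P : Set E) + Metric.closedBall 0 (ε/2) := by
      intro y hy
      obtain ⟨-, x, hxP, hxy⟩ := Finset.mem_filter.mp (Finset.mem_coe.mp hy)
      refine ⟨x, hxP, y - x, ?_, by simp⟩
      rw [mem_closedBall_zero_iff, ← dist_eq_norm, dist_comm]
      exact hxy.le
    have hconv : Convex ℝ ((P : Set E) + Metric.closedBall 0 (ε/2)) :=
      P.convex.add (convex_closedBall _ _)
    rw [coe_hullBody hTne] at hz
    obtain ⟨x, hxP, w, hw, rfl⟩ := Set.mem_add.mp (convexHull_min hsub hconv hz)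
    refine ⟨x, hxP, ?_⟩
    have : dist (x + w) x = ‖w‖ := by rw [dist_eq_norm]; simp
    rw [this]
    exact mem_closedBall_zero_iff.mp hw

lemma msupport_compl_eq {X : Type*} [TopologicalSpace X] [MeasurableSpace X] (μ : Measure X) :
    (msupport μ)ᶜ = ⋃₀ {U : Set X | IsOpen U ∧ μ U = 0} := by
  ext x
  simp only [Set.mem_compl_iff, msupport, Set.mem_setOf_eq, Set.mem_sUnion]
  push_neg
  constructor
  · rintro ⟨U, hU, hxU, hμ⟩; exact ⟨U, ⟨hU, hμ⟩, hxU⟩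
  · rintro ⟨U, ⟨hU, hμ⟩, hxU⟩; exact ⟨U, hU, hxU, hμ⟩

lemma msupport_isClosed {X : Type*} [TopologicalSpace X] [MeasurableSpace X] (μ : Measure X) :
    IsClosed (msupport μ) := by
  rw [← isOpen_compl_iff, msupport_compl_eq]
  exact isOpen_sUnion fun U hU => hU.1

lemma measure_msupport_compl {X : Type*} [TopologicalSpace X] [SecondCountableTopology X]
    [MeasurableSpace X] (μ : Measure X) : μ (msupport μ)ᶜ = 0 := by
  obtain ⟨T, hTc, hTsub, hTu⟩ :=
    TopologicalSpace.isOpen_sUnion_countable {U : Set X | IsOpen U ∧ μ U = 0}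
      (fun U hU => hU.1)
  rw [msupport_compl_eq, ← hTu]
  exact (measure_sUnion_null_iff hTc).mpr fun U hU => (hTsub hU).2

lemma isometry_toNC : Isometry (fun K : ConvexBody E =>
    (⟨⟨(K : Set E), K.isCompact⟩, K.nonempty⟩ : TopologicalSpace.NonemptyCompacts E)) :=
  Isometry.of_dist_eq fun K L => by
    rw [Metric.NonemptyCompacts.dist_eq, ← ConvexBody.hausdorffDist_coe]
    rfl

instance : SecondCountableTopology (ConvexBody E) :=
  isometry_toNC.isEmbedding.secondCountableTopology

end MacroidAux



open MacroidAux

set_option maxHeartbeats 2000000 in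
theorem macroid_limit_of_posComb {n : ℕ}
    [MeasurableSpace (ConvexBody (EuclideanSpace ℝ (Fin n)))]
    [BorelSpace (ConvexBody (EuclideanSpace ℝ (Fin n)))]
    (𝒦 : Set (ConvexBody (EuclideanSpace ℝ (Fin n)))) (h𝒦ne : 𝒦.Nonempty)
    (h𝒦meas : MeasurableSet 𝒦)
    (μ : Measure (ConvexBody (EuclideanSpace ℝ (Fin n)))) [IsProbabilityMeasure μ]
    (hconc : μ 𝒦ᶜ = 0)
    (hbd : Bornology.IsBounded (𝒦 ∩ msupport μ))
    (K : ConvexBody (EuclideanSpace ℝ (Fin n)))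
    (hK : ∀ u, sfn K u = ∫ P, sfn P u ∂μ) :
    ∃ Q : ℕ → ConvexBody (EuclideanSpace ℝ (Fin n)),
      (∀ j, ∃ (N : ℕ) (c : Fin N → ℝ≥0) (L : Fin N → ConvexBody (EuclideanSpace ℝ (Fin n))),
        (∀ i, L i ∈ 𝒦 ∩ msupport μ) ∧ Q j = ∑ i, c i • L i) ∧
      Tendsto Q atTop (𝓝 K) := by
  classical
  have hCmeas : MeasurableSet (𝒦 ∩ msupport μ) :=
    h𝒦meas.inter (msupport_isClosed μ).measurableSet
  have hCcompl : μ (𝒦 ∩ msupport μ)ᶜ = 0 := by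
    rw [Set.compl_inter]
    exact measure_union_null hconc (measure_msupport_compl μ)
  have hCne : (𝒦 ∩ msupport μ).Nonempty := by
    rw [Set.nonempty_iff_ne_empty]
    intro h
    rw [h, Set.compl_empty] at hCcompl
    simp [measure_univ] at hCcompl
  obtain ⟨K0, hK0⟩ := hCne
  obtain ⟨r, hr⟩ := hbd.subset_closedBall K0
  obtain ⟨M, hM⟩ := K0.isBounded.subset_closedBall 0
  have hdistK0 : ∀ P ∈ 𝒦 ∩ msupport μ, dist P K0 ≤ |r| := fun P hP =>
    le_trans (Metric.mem_closedBall.mp (hr hP)) (le_abs_self r)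
  have hbodies : ∀ P ∈ 𝒦 ∩ msupport μ,
      (P : Set (EuclideanSpace ℝ (Fin n))) ⊆ Metric.closedBall 0 (|r| + |M|) := by
    intro P hP x hx
    have h1 : Metric.infDist x (K0 : Set (EuclideanSpace ℝ (Fin n))) ≤ |r| := by
      refine le_trans ?_ (hdistK0 P hP)
      rw [← ConvexBody.hausdorffDist_coe]
      exact Metric.infDist_le_hausdorffDist_of_mem hx ConvexBody.hausdorffEdist_ne_top
    obtain ⟨y, hy, hdy⟩ := K0.isCompact.exists_infDist_eq_dist K0.nonempty x
    have h2 : ‖y‖ ≤ |M| := le_trans (mem_closedBall_zero_iff.mp (hM hy)) (le_abs_self M)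
    rw [mem_closedBall_zero_iff]
    have h3 : ‖x - y‖ ≤ |r| := by rw [← dist_eq_norm, ← hdy]; exact h1
    calc ‖x‖ = ‖x - y + y‖ := by rw [sub_add_cancel]
      _ ≤ ‖x - y‖ + ‖y‖ := norm_add_le _ _
      _ ≤ |r| + |M| := add_le_add h3 h2
  have hcont : ∀ u, Continuous (fun P : ConvexBody (EuclideanSpace ℝ (Fin n)) => sfn P u) := by
    intro u
    have hlip : LipschitzWith ‖u‖₊ (fun P : ConvexBody (EuclideanSpace ℝ (Fin n)) => sfn P u) := by
      apply LipschitzWith.of_dist_le_mul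
      intro P Q
      rw [Real.dist_eq, coe_nnnorm, mul_comm]
      exact abs_sfn_sub P Q u
    exact hlip.continuous
  have haePC : ∀ᵐ P ∂μ, P ∈ 𝒦 ∩ msupport μ := by
    have hs : {a | ¬ a ∈ 𝒦 ∩ msupport μ} = (𝒦 ∩ msupport μ)ᶜ := rfl
    rw [ae_iff, hs]
    exact hCcompl
  have hint : ∀ u, Integrable (fun P => sfn P u) μ := by
    intro u
    refine Integrable.mono' (integrable_const (|sfn K0 u| + |r| * ‖u‖))
      ((hcont u).aestronglyMeasurable) ?_
    filter_upwards [haePC] with P hP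
    rw [Real.norm_eq_abs]
    have h1 : |sfn P u - sfn K0 u| ≤ dist P K0 * ‖u‖ := abs_sfn_sub P K0 u
    have h2 : dist P K0 * ‖u‖ ≤ |r| * ‖u‖ :=
      mul_le_mul_of_nonneg_right (hdistK0 P hP) (norm_nonneg u)
    calc |sfn P u| = |sfn K0 u + (sfn P u - sfn K0 u)| := by ring_nf
      _ ≤ |sfn K0 u| + |sfn P u - sfn K0 u| := abs_add_le _ _
      _ ≤ |sfn K0 u| + |r| * ‖u‖ := by linarith
  have main : ∀ ε : ℝ, 0 < ε → ∃ (N : ℕ) (c : Fin N → ℝ≥0)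
      (L : Fin N → ConvexBody (EuclideanSpace ℝ (Fin n))),
      (∀ i, L i ∈ 𝒦 ∩ msupport μ) ∧ dist (∑ i, c i • L i) K ≤ ε := by
    intro ε hε
    obtain ⟨t, htfin, htcov⟩ := Metric.totallyBounded_iff.mp
      (totallyBounded_of_forall_subset hbodies) (ε/4) (by positivity)
    set F := htfin.toFinset with hF
    set N := F.card with hN
    set e : Fin N → ConvexBody (EuclideanSpace ℝ (Fin n)) :=
      fun i => (F.equivFin.symm i : ConvexBody (EuclideanSpace ℝ (Fin n))) with he
    set B : Fin N → Set (ConvexBody (EuclideanSpace ℝ (Fin n))) :=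
      fun i => (𝒦 ∩ msupport μ) ∩ Metric.ball (e i) (ε/4) with hB
    set A : Fin N → Set (ConvexBody (EuclideanSpace ℝ (Fin n))) :=
      fun i => B i \ ⋃ (k : Fin N) (_ : k < i), B k with hA
    have hmeasB : ∀ i, MeasurableSet (B i) :=
      fun i => hCmeas.inter Metric.isOpen_ball.measurableSet
    have hmeasA : ∀ i, MeasurableSet (A i) := fun i =>
      (hmeasB i).diff (MeasurableSet.iUnion fun k => MeasurableSet.iUnion fun _ => hmeasB k)
    have hAsubB : ∀ i, A i ⊆ B i := fun i => Set.diff_subset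
    have hAsubC : ∀ i, A i ⊆ 𝒦 ∩ msupport μ := fun i => (hAsubB i).trans Set.inter_subset_left
    have hdisj' : ∀ i j : Fin N, i < j → Disjoint (A i) (A j) := by
      intro i j hij
      rw [Set.disjoint_left]
      intro P hPi hPj
      exact hPj.2 (Set.mem_iUnion₂.mpr ⟨i, hij, hAsubB i hPi⟩)
    have hdisj : Pairwise (Function.onFun Disjoint A) := by
      intro i j hij
      rcases lt_or_gt_of_ne hij with h | h
      · exact hdisj' i j h
      · exact (hdisj' j i h).symm
    have hcover : ∀ P ∈ 𝒦 ∩ msupport μ, ∃ i, P ∈ B i := by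
      intro P hP
      obtain ⟨y, hy, hPy⟩ := Set.mem_iUnion₂.mp (htcov hP)
      refine ⟨F.equivFin ⟨y, htfin.mem_toFinset.mpr hy⟩, hP, ?_⟩
      have hey : e (F.equivFin ⟨y, htfin.mem_toFinset.mpr hy⟩) = y := by
        rw [he]; simp
      rw [hey]
      exact hPy
    have hUnion : (⋃ i, A i) = 𝒦 ∩ msupport μ := by
      apply Set.Subset.antisymm
      · exact Set.iUnion_subset hAsubC
      · intro P hP
        obtain ⟨i, hi⟩ := hcover P hP
        have hne : (Finset.univ.filter (fun k => P ∈ B k)).Nonempty :=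
          ⟨i, by simp [hi]⟩
        set i0 := (Finset.univ.filter (fun k => P ∈ B k)).min' hne with hi0def
        have hi0 : P ∈ B i0 :=
          (Finset.mem_filter.mp ((Finset.univ.filter (fun k => P ∈ B k)).min'_mem hne)).2
        refine Set.mem_iUnion.mpr ⟨i0, hi0, ?_⟩
        intro hmem
        obtain ⟨k, hk, hPk⟩ := Set.mem_iUnion₂.mp hmem
        have hle : i0 ≤ k := Finset.min'_le _ k (by simp [hPk])
        exact absurd hk (not_lt.mpr hle)
    set L : Fin N → ConvexBody (EuclideanSpace ℝ (Fin n)) :=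
      fun i => if h : (A i).Nonempty then h.choose else K0 with hL
    have hLmem : ∀ i, L i ∈ 𝒦 ∩ msupport μ := by
      intro i
      rw [hL]
      by_cases h : (A i).Nonempty
      · simp only [dif_pos h]; exact hAsubC i h.choose_spec
      · simp only [dif_neg h]; exact hK0
    set c : Fin N → ℝ≥0 := fun i => (μ (A i)).toNNReal with hc
    refine ⟨N, c, L, hLmem, ?_⟩
    have hest : ∀ u, |sfn (∑ i, c i • L i) u - sfn K u| ≤ (ε/2) * ‖u‖ := by
      intro u
      rw [sfn_sum, hK u]
      have hsplit : ∫ P, sfn P u ∂μ = ∑ i, ∫ P in A i, sfn P u ∂μ := by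
        have h2 : ∫ P in (⋃ i, A i), sfn P u ∂μ = ∑ i, ∫ P in A i, sfn P u ∂μ := by
          have h0 := MeasureTheory.integral_biUnion_finset (f := fun P => sfn P u) (μ := μ)
            Finset.univ (fun i _ => hmeasA i) (hdisj.set_pairwise _)
            (fun i _ => (hint u).integrableOn)
          simpa using h0
        have h3 : ∫ P in (⋃ i, A i)ᶜ, sfn P u ∂μ = 0 := by
          rw [Measure.restrict_eq_zero.mpr (by rw [hUnion]; exact hCcompl)]
          exact integral_zero_measure _
        rw [← MeasureTheory.integral_add_compl (MeasurableSet.iUnion hmeasA) (hint u), h2, h3,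
          add_zero]
      rw [hsplit, ← Finset.sum_sub_distrib]
      refine le_trans (Finset.abs_sum_le_sum_abs _ _) ?_
      have hterm : ∀ i, |(c i : ℝ) * sfn (L i) u - ∫ P in A i, sfn P u ∂μ| ≤
          ((ε/2) * ‖u‖) * (μ (A i)).toReal := by
        intro i
        by_cases hAne : (A i).Nonempty
        · have hLi : L i ∈ A i := by
            rw [hL]; simp only [dif_pos hAne]; exact hAne.choose_spec
          have hconst : (c i : ℝ) * sfn (L i) u = ∫ P in A i, sfn (L i) u ∂μ := by
            rw [MeasureTheory.setIntegral_const, smul_eq_mul]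
            rfl
          rw [hconst,
            ← MeasureTheory.integral_sub
              (MeasureTheory.integrableOn_const (C := sfn (L i) u) (s := A i) (measure_ne_top μ _) enorm_ne_top)
              ((hint u).integrableOn)]
          have hb : ∀ P ∈ A i, ‖sfn (L i) u - sfn P u‖ ≤ (ε/2) * ‖u‖ := by
            intro P hP
            have hPB : P ∈ B i := hAsubB i hP
            have hLB : L i ∈ B i := hAsubB i hLi
            have hd1 : dist P (e i) < ε/4 := Metric.mem_ball.mp hPB.2
            have hd2 : dist (L i) (e i) < ε/4 := Metric.mem_ball.mp hLB.2
            have hPL : dist (L i) P ≤ ε/2 := by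
              calc dist (L i) P ≤ dist (L i) (e i) + dist (e i) P := dist_triangle _ _ _
                _ ≤ ε/4 + ε/4 := by rw [dist_comm (e i) P]; linarith
                _ = ε/2 := by ring
            rw [Real.norm_eq_abs]
            calc |sfn (L i) u - sfn P u| ≤ dist (L i) P * ‖u‖ := abs_sfn_sub _ _ u
              _ ≤ (ε/2) * ‖u‖ := mul_le_mul_of_nonneg_right hPL (norm_nonneg u)
          have hnb := MeasureTheory.norm_setIntegral_le_of_norm_le_const (measure_lt_top μ _)
            hb
          rwa [Real.norm_eq_abs] at hnb
        · have hA0 : A i = ∅ := Set.not_nonempty_iff_eq_empty.mp hAne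
          simp [hA0, hc]
      refine le_trans (Finset.sum_le_sum (fun i _ => hterm i)) ?_
      rw [← Finset.mul_sum]
      have hsum1 : ∑ i, (μ (A i)).toReal ≤ 1 := by
        rw [← ENNReal.toReal_sum (fun i _ => measure_ne_top μ _)]
        have hμU : ∑ i, μ (A i) = μ (⋃ i, A i) := by
          rw [measure_iUnion hdisj hmeasA, tsum_fintype]
        rw [hμU]
        calc (μ (⋃ i, A i)).toReal ≤ (μ Set.univ).toReal :=
              ENNReal.toReal_mono (measure_ne_top μ _) (measure_mono (Set.subset_univ _))
          _ = 1 := by simp [measure_univ]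
      calc (ε/2) * ‖u‖ * ∑ i, (μ (A i)).toReal ≤ (ε/2) * ‖u‖ * 1 :=
            mul_le_mul_of_nonneg_left hsum1 (by positivity)
        _ = (ε/2) * ‖u‖ := mul_one _
    refine dist_le_of_sfn hε.le ?_ ?_ <;> intro u <;>
      [have h' := abs_le.mp (hest u); have h' := abs_le.mp (hest u)] <;>
      have hu := norm_nonneg u <;> nlinarith
  have seq : ∀ j : ℕ, ∃ Qj : ConvexBody (EuclideanSpace ℝ (Fin n)),
      (∃ (N : ℕ) (c : Fin N → ℝ≥0) (L : Fin N → ConvexBody (EuclideanSpace ℝ (Fin n))),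
        (∀ i, L i ∈ 𝒦 ∩ msupport μ) ∧ Qj = ∑ i, c i • L i) ∧ dist Qj K ≤ 1 / (j + 1) := by
    intro j
    obtain ⟨N, c, L, hL, hd⟩ := main (1 / (j + 1)) (by positivity)
    exact ⟨∑ i, c i • L i, ⟨N, c, L, hL, rfl⟩, hd⟩
  choose Q hQ1 hQ2 using seq
  refine ⟨Q, hQ1, ?_⟩
  rw [tendsto_iff_dist_tendsto_zero]
  exact squeeze_zero (fun j => dist_nonneg) hQ2 tendsto_one_div_add_atTop_nhds_zero_nat
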